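/- Let H = p1^2 + p2^2 - 4*a*(q1^4 + 12*q1^2*q2^2 + 16*q2^4) and G = 4*a*q1^2*q2*(q1^2 + 2*q2^2) + p1*(q2*p1 - q1*p2)/2 on R^4 with coordinates (q1, q2, p1, p2). Then the canonical Poisson bracket {H, G} vanishes identically. -/

import Mathlib

set_option linter.unusedTactic false

/-- Canonical Poisson bracket on `ℝ⁴` with coordinates `(x₁, x₂, p₁, p₂)`. -/
noncomputable def pb (f g : ℝ → ℝ → ℝ → ℝ → ℝ) (x1 x2 p1 p2 : ℝ) : ℝ :=
    deriv (fun t => f t x2 p1 p2) x1 * deriv (fun t => g x1 x2 t p2) p1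
  + deriv (fun t => f x1 t p1 p2) x2 * deriv (fun t => g x1 x2 p1 t) p2
  - deriv (fun t => f x1 x2 t p2) p1 * deriv (fun t => g t x2 p1 p2) x1
  - deriv (fun t => f x1 x2 p1 t) p2 * deriv (fun t => g x1 t p1 p2) x2

theorem system_1_12_16_involution (a : ℝ) (q1 q2 p1 p2 : ℝ) :
    pb (fun q1 q2 p1 p2 => p1^2 + p2^2 - 4 * a * (q1^4 + 12 * q1^2 * q2^2 + 16 * q2^4))
       (fun q1 q2 p1 p2 =>
          4 * a * q1^2 * q2 * (q1^2 + 2 * q2^2) + p1 * (q2 * p1 - q1 * p2) / 2)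
       q1 q2 p1 p2 = 0 := by
  have hH1 : HasDerivAt
      (fun t : ℝ => p1^2 + p2^2 - 4 * a * (t^4 + 12 * t^2 * q2^2 + 16 * q2^4))
      (-(4*a)*(4*q1^3 + 24*q1*q2^2)) q1 := by
    have := (((hasDerivAt_pow 4 q1).add
        (((hasDerivAt_pow 2 q1).mul_const (q2^2)).const_mul 12 |>.add
          (hasDerivAt_const q1 (16*q2^4)))).const_mul (4*a)).const_sub (p1^2+p2^2)
    convert this using 1
    · rfl
    · rfl
    · funext t; (try simp only [id_eq, Pi.add_apply, Pi.sub_apply]); ring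
    · push_cast; ring
  have hH2 : HasDerivAt
      (fun t : ℝ => p1^2 + p2^2 - 4 * a * (q1^4 + 12 * q1^2 * t^2 + 16 * t^4))
      (-(4*a)*(24*q1^2*q2 + 64*q2^3)) q2 := by
    have := (((hasDerivAt_const q2 (q1^4)).add (((hasDerivAt_pow 2 q2).const_mul (12*q1^2)).add
        ((hasDerivAt_pow 4 q2).const_mul 16))).const_mul (4*a)).const_sub (p1^2+p2^2)
    convert this using 1
    · rfl
    · rfl
    · funext t; (try simp only [id_eq, Pi.add_apply, Pi.sub_apply]); ring
    · push_cast; ring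
  have hH3 : HasDerivAt
      (fun t : ℝ => t^2 + p2^2 - 4 * a * (q1^4 + 12 * q1^2 * q2^2 + 16 * q2^4))
      (2*p1) p1 := by
    have := ((hasDerivAt_pow 2 p1).add_const (p2^2)).sub_const
      (4 * a * (q1^4 + 12 * q1^2 * q2^2 + 16 * q2^4))
    convert this using 1
    · rfl
    · rfl
    push_cast; ring
  have hH4 : HasDerivAt
      (fun t : ℝ => p1^2 + t^2 - 4 * a * (q1^4 + 12 * q1^2 * q2^2 + 16 * q2^4))
      (2*p2) p2 := by
    have := (((hasDerivAt_pow 2 p2).const_add (p1^2))).sub_const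
      (4 * a * (q1^4 + 12 * q1^2 * q2^2 + 16 * q2^4))
    convert this using 1
    · rfl
    · rfl
    push_cast; ring
  have hG1 : HasDerivAt
      (fun t : ℝ => 4 * a * t^2 * q2 * (t^2 + 2 * q2^2) + p1 * (q2 * p1 - t * p2) / 2)
      (4*a*(4*q1^3*q2 + 4*q1*q2^3) - p1*p2/2) q1 := by
    have := (((hasDerivAt_pow 4 q1).const_mul (4*a*q2)).add
        ((hasDerivAt_pow 2 q1).const_mul (8*a*q2^3))).add
        (((hasDerivAt_id q1).const_mul (-(p1*p2/2))).add_const (q2*p1^2/2))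
    convert this using 1
    · rfl
    · rfl
    · funext t; (try simp only [id_eq, Pi.add_apply, Pi.sub_apply]); ring
    · push_cast; ring
  have hG2 : HasDerivAt
      (fun t : ℝ => 4 * a * q1^2 * t * (q1^2 + 2 * t^2) + p1 * (t * p1 - q1 * p2) / 2)
      (4*a*q1^4 + 24*a*q1^2*q2^2 + p1^2/2) q2 := by
    have := (((hasDerivAt_id q2).const_mul (4*a*q1^4)).add
        ((hasDerivAt_pow 3 q2).const_mul (8*a*q1^2))).add
        (((hasDerivAt_id q2).const_mul (p1^2/2)).sub_const (q1*p1*p2/2))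
    convert this using 1
    · rfl
    · rfl
    · funext t; (try simp only [id_eq, Pi.add_apply, Pi.sub_apply]); ring
    · push_cast; ring
  have hG3 : HasDerivAt
      (fun t : ℝ => 4 * a * q1^2 * q2 * (q1^2 + 2 * q2^2) + t * (q2 * t - q1 * p2) / 2)
      (q2*p1 - q1*p2/2) p1 := by
    have := ((((hasDerivAt_pow 2 p1).const_mul (q2/2)).sub
        ((hasDerivAt_id p1).const_mul (q1*p2/2)))).const_add
        (4 * a * q1^2 * q2 * (q1^2 + 2 * q2^2))
    convert this using 1
    · rfl
    · rfl
    · funext t; (try simp only [id_eq, Pi.add_apply, Pi.sub_apply]); ring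
    · push_cast; ring
  have hG4 : HasDerivAt
      (fun t : ℝ => 4 * a * q1^2 * q2 * (q1^2 + 2 * q2^2) + p1 * (q2 * p1 - q1 * t) / 2)
      (-(p1*q1/2)) p2 := by
    have := (((hasDerivAt_id p2).const_mul (-(p1*q1/2)))).const_add
      (4 * a * q1^2 * q2 * (q1^2 + 2 * q2^2) + p1*q2*p1/2)
    convert this using 1
    · rfl
    · rfl
    · funext t; (try simp only [id_eq]); ring
    · simp
  simp only [pb]
  rw [hH1.deriv, hH2.deriv, hH3.deriv, hH4.deriv, hG1.deriv, hG2.deriv, hG3.deriv, hG4.deriv]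
  ring
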